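/- arXiv:1106.3153 — 3 statements merged into one kernel-verified Lean document; each statement's English description precedes it below -/
import Mathlib

section
/- Let y ∈ {0,1}^ℕ be computable with infinitely many 1's, and let U ⊆ ℕ × {0,1}* be a Martin-Löf test with respect to the uniform measure λ. Define U^y := {(n, a) : ∃ s ∈ U_n, a ∈ y(s)}, where y(s) is the finite set of strings a of length τ(|s|) with a_{τ(j)} = s_j for all j ≤ |s|. Then U^y is a Martin-Löf test with respect to λ, and for every x ∈ Ω and every n: x ∈ ⋃_{a ∈ U^y_n} Δ(a) if and only if x/y ∈ ⋃_{s ∈ U_n} Δ(s). -/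
open MeasureTheory Filter
open scoped ENNReal

/-- Cylinder set `Δ(s)` of infinite binary sequences extending the finite string `s`. -/
def cyl (s : List Bool) : Set (ℕ → Bool) := {x | ∀ i < s.length, x i = s.getD i false}

/-- The first `n` bits `y_1^n` of an infinite sequence `y`. -/
def pref (y : ℕ → Bool) (n : ℕ) : List Bool := List.ofFn (fun i : Fin n => y i)

/-- `tau y j` is the (0-indexed) position of the `(j+1)`-st `1` in `y`. -/
noncomputable def tau (y : ℕ → Bool) (j : ℕ) : ℕ := Nat.nth (fun i => y i = true) j

/-- The selected subsequence `x/y` of `x` at positions where `y` is `1`. -/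
noncomputable def selSeq (x y : ℕ → Bool) : ℕ → Bool := fun j => x (tau y j)

/-- The `n`-th level of a set `U ⊆ ℕ × strings`, as a set of sequences. -/
def lvl (U : Set (ℕ × List Bool)) (n : ℕ) : Set (ℕ → Bool) :=
  ⋃ s ∈ {s : List Bool | (n, s) ∈ U}, cyl s

/-- `A` is recursively enumerable (as a set of pairs). -/
def REset (A : Set (ℕ × List Bool)) : Prop :=
  ∃ f : ℕ × List Bool →. Unit, Partrec f ∧ ∀ a, a ∈ A ↔ (f a).Dom

/-- Martin-Löf test with respect to the measure `P`. -/
def MLTest (P : Measure (ℕ → Bool)) (U : Set (ℕ × List Bool)) : Prop :=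
  REset U ∧ (∀ n, lvl U (n + 1) ⊆ lvl U n) ∧ ∀ n, P (lvl U n) < (2 : ℝ≥0∞)⁻¹ ^ n

/-- `y` is Martin-Löf random with respect to `P`: it passes every ML test. -/
def MLRandom (P : Measure (ℕ → Bool)) (y : ℕ → Bool) : Prop :=
  ∀ U : Set (ℕ × List Bool), MLTest P U → ∃ n, y ∉ lvl U n

/-- `P` is a computable probability measure. -/
def ComputableMeasure (P : Measure (ℕ → Bool)) : Prop :=
  ∃ A : List Bool → ℕ → ℚ, Computable₂ A ∧
    ∀ s k, |(P (cyl s)).toReal - (A s k : ℝ)| < 1 / (k + 1)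

section Aux

/-! ### List helpers -/

lemma list_getD_ofFn {n : ℕ} (f : Fin n → Bool) {t : ℕ} (ht : t < n) :
    (List.ofFn f).getD t false = f ⟨t, ht⟩ := by
  rw [List.getD_eq_getElem _ _ (by simpa using ht), List.getElem_ofFn]

lemma list_eq_of_getD {l₁ l₂ : List Bool} (hlen : l₁.length = l₂.length)
    (h : ∀ j < l₁.length, l₁.getD j false = l₂.getD j false) : l₁ = l₂ := by
  apply List.ext_getElem hlen
  intro j h1 h2
  have := h j h1
  rwa [List.getD_eq_getElem _ _ h1, List.getD_eq_getElem _ _ h2] at this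

/-! ### Measurability -/

lemma measurableSet_cyl (s : List Bool) : MeasurableSet (cyl s) := by
  have : cyl s = ⋂ (i : ℕ) (_ : i < s.length), (fun x : ℕ → Bool => x i) ⁻¹' {s.getD i false} := by
    ext x; simp [cyl]
  rw [this]
  exact MeasurableSet.iInter fun i => MeasurableSet.iInter fun _ =>
    (measurable_pi_apply i) (measurableSet_singleton _)

lemma measurableSet_lvl (U : Set (ℕ × List Bool)) (n : ℕ) : MeasurableSet (lvl U n) :=
  MeasurableSet.biUnion (Set.to_countable _) (fun s _ => measurableSet_cyl s)

lemma coord_mem_generate (i : ℕ) (b : Bool) :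
    MeasurableSet[MeasurableSpace.generateFrom (Set.range cyl)] {x : ℕ → Bool | x i = b} := by
  have hrepr : {x : ℕ → Bool | x i = b} =
      ⋃ (a : Fin (i + 1) → Bool) (_ : a ⟨i, Nat.lt_succ_self i⟩ = b), cyl (List.ofFn a) := by
    ext x
    simp only [Set.mem_iUnion, Set.mem_setOf_eq]
    constructor
    · intro hx
      refine ⟨fun t => x t, by simpa using hx, ?_⟩
      intro t ht
      rw [List.length_ofFn] at ht
      rw [list_getD_ofFn _ ht]
    · rintro ⟨a, ha, hc⟩
      have := hc i (by simp)
      rwa [list_getD_ofFn _ (Nat.lt_succ_self i), ha] at this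
  rw [hrepr]
  exact MeasurableSet.iUnion fun a => MeasurableSet.iUnion fun _ =>
    MeasurableSpace.measurableSet_generateFrom ⟨_, rfl⟩

lemma generate_cyl :
    (inferInstance : MeasurableSpace (ℕ → Bool)) = MeasurableSpace.generateFrom (Set.range cyl) := by
  apply le_antisymm
  · refine iSup_le fun i => ?_
    have hev : @Measurable (ℕ → Bool) Bool (MeasurableSpace.generateFrom (Set.range cyl)) _
        (fun x => x i) := by
      intro s _
      have : (fun x : ℕ → Bool => x i) ⁻¹' s = ⋃ b ∈ s, {x : ℕ → Bool | x i = b} := by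
        ext x; simp
      rw [this]
      exact MeasurableSet.biUnion s.to_countable (fun b _ => coord_mem_generate i b)
    exact (@measurable_iff_comap_le _ _ _ _ (fun x : ℕ → Bool => x i)).1 hev
  · exact MeasurableSpace.generateFrom_le (by rintro _ ⟨s, rfl⟩; exact measurableSet_cyl s)

lemma isPiSystem_cyl : IsPiSystem (Set.range cyl) := by
  have aux : ∀ s t : List Bool, s.length ≤ t.length → ∀ x, x ∈ cyl s → x ∈ cyl t →
      cyl s ∩ cyl t = cyl t := by
    intro s t h x hxs hxt
    refine Set.inter_eq_self_of_subset_right ?_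
    intro z hz i hi
    rw [hz i (lt_of_lt_of_le hi h), ← hxt i (lt_of_lt_of_le hi h), hxs i hi]
  rintro _ ⟨s, rfl⟩ _ ⟨t, rfl⟩ hne
  obtain ⟨x, hxs, hxt⟩ := hne
  rcases le_total s.length t.length with h | h
  · rw [aux s t h x hxs hxt]; exact ⟨t, rfl⟩
  · rw [Set.inter_comm, aux t s h x hxt hxs]; exact ⟨s, rfl⟩

end Aux

section Tau

variable {y : ℕ → Bool} (hy : {i | y i = true}.Infinite)
include hy

lemma tau_mem (j : ℕ) : y (tau y j) = true := Nat.nth_mem_of_infinite hy j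

lemma tau_le_tau {a b : ℕ} (h : a ≤ b) : tau y a ≤ tau y b := (Nat.nth_le_nth hy).2 h

lemma count_tau (j : ℕ) : Nat.count (fun i => y i = true) (tau y j) = j :=
  Nat.count_nth_of_infinite hy j

omit hy in
lemma tau_count {n : ℕ} (h : y n = true) : tau y (Nat.count (fun i => y i = true) n) = n :=
  Nat.nth_count h

lemma self_le_tau (j : ℕ) : j ≤ tau y j :=
  Nat.le_nth fun hf => (hy hf).elim

/-- The strings describing the preimage of a cylinder under selection. -/
noncomputable def str (y : ℕ → Bool) (s : List Bool) (k : ℕ)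
    (c : {i : Fin (tau y k + 1) // y i.val = false} → Bool) : List Bool :=
  List.ofFn (fun i : Fin (tau y k + 1) =>
    if h : y i.val = true then s.getD (Nat.count (fun t => y t = true) i.val) false
    else c ⟨i, Bool.eq_false_iff.mpr h⟩)

lemma sel_cyl_eq (s : List Bool) {k : ℕ} (hk : s.length = k + 1) :
    (fun x => selSeq x y) ⁻¹' cyl s =
      ⋃ c : {i : Fin (tau y k + 1) // y i.val = false} → Bool, cyl (str y s k c) := by
  ext x
  simp only [Set.mem_preimage, Set.mem_iUnion]
  constructor
  · intro hx
    refine ⟨fun i => x i.1.1, ?_⟩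
    intro i hi
    rw [str, List.length_ofFn] at hi
    rw [str, list_getD_ofFn _ hi]
    by_cases h : y i = true
    · rw [dif_pos h]
      have hile : i ≤ tau y k := Nat.lt_succ_iff.mp hi
      have hcle : Nat.count (fun t => y t = true) i ≤ k := by
        have := Nat.count_monotone (fun t => y t = true) hile
        rwa [count_tau hy k] at this
      have := hx (Nat.count (fun t => y t = true) i) (by omega)
      rwa [selSeq, tau_count h] at this
    · rw [dif_neg h]
  · rintro ⟨c, hc⟩
    intro j hj
    rw [hk] at hj
    have htle : tau y j ≤ tau y k := tau_le_tau hy (by omega)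
    have hlt : tau y j < tau y k + 1 := by omega
    have := hc (tau y j) (by rw [str, List.length_ofFn]; exact hlt)
    rw [str, list_getD_ofFn _ hlt, dif_pos (tau_mem hy j), count_tau hy j] at this
    simpa [selSeq, hk] using this

lemma card_true_subtype (k : ℕ) :
    Fintype.card {i : Fin (tau y k + 1) // y i.val = true} = k + 1 := by
  have e : Fin (k + 1) ≃ {i : Fin (tau y k + 1) // y i.val = true} :=
    { toFun := fun j => ⟨⟨tau y j, Nat.lt_succ_iff.mpr (tau_le_tau hy (Nat.lt_succ_iff.mp j.2))⟩,
        tau_mem hy j⟩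
      invFun := fun i => ⟨Nat.count (fun t => y t = true) i.1, by
        have h1 : (i.1 : ℕ) ≤ tau y k := Nat.lt_succ_iff.mp i.1.2
        have := Nat.count_monotone (fun t => y t = true) h1
        rw [count_tau hy k] at this
        omega⟩
      left_inv := fun j => by
        ext
        simp [count_tau hy]
      right_inv := fun i => by
        ext
        simp [tau_count i.2] }
  rw [← Fintype.card_congr e, Fintype.card_fin]

lemma card_false_subtype (k : ℕ) :
    Fintype.card {i : Fin (tau y k + 1) // y i.val = false} = tau y k - k := by
  have e : {i : Fin (tau y k + 1) // y i.val = false} ≃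
      {i : Fin (tau y k + 1) // ¬ (y i.val = true)} :=
    Equiv.subtypeEquivRight (by simp)
  rw [Fintype.card_congr e, Fintype.card_subtype_compl, Fintype.card_fin, card_true_subtype hy]
  omega

lemma measure_sel_cyl (lam : Measure (ℕ → Bool)) [IsProbabilityMeasure lam]
    (hlam : ∀ s : List Bool, lam (cyl s) = (2 : ℝ≥0∞)⁻¹ ^ s.length) (s : List Bool) :
    lam ((fun x => selSeq x y) ⁻¹' cyl s) = (2 : ℝ≥0∞)⁻¹ ^ s.length := by
  rcases eq_or_ne s.length 0 with h0 | h0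
  · have : cyl s = Set.univ := by
      ext x; simp [cyl, h0]
    simp [this, h0]
  · obtain ⟨k, hk⟩ := Nat.exists_eq_succ_of_ne_zero h0
    rw [sel_cyl_eq hy s hk]
    have hdisj : Pairwise (Function.onFun Disjoint
        (fun c : {i : Fin (tau y k + 1) // y i.val = false} → Bool => cyl (str y s k c))) := by
      intro c c' hne
      obtain ⟨i, hi⟩ := Function.ne_iff.mp hne
      rw [Function.onFun, Set.disjoint_left]
      intro x hxc hxc'
      have hlt : (i.1 : ℕ) < tau y k + 1 := i.1.2
      have h1 := hxc i.1 (by rw [str, List.length_ofFn]; exact hlt)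
      have h2 := hxc' i.1 (by rw [str, List.length_ofFn]; exact hlt)
      rw [str, list_getD_ofFn _ hlt] at h1 h2
      have hni : ¬ (y i.1.1 = true) := by simp [i.2]
      rw [dif_neg hni] at h1 h2
      apply hi
      have : (⟨i.1, Bool.eq_false_iff.mpr hni⟩ : {i : Fin (tau y k + 1) // y i.val = false}) = i := by
        ext; rfl
      rw [this] at h1 h2
      rw [← h1, ← h2]
    rw [measure_iUnion hdisj (fun c => measurableSet_cyl _)]
    have hval : ∀ c, lam (cyl (str y s k c)) = (2 : ℝ≥0∞)⁻¹ ^ (tau y k + 1) := by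
      intro c; rw [hlam, str, List.length_ofFn]
    rw [tsum_eq_sum (s := Finset.univ) (by simp)]
    simp_rw [hval]
    rw [Finset.sum_const, Finset.card_univ, nsmul_eq_mul]
    rw [Fintype.card_fun, card_false_subtype hy, Fintype.card_bool]
    have hkle : k ≤ tau y k := self_le_tau hy k
    have hsplit : tau y k + 1 = (tau y k - k) + (k + 1) := by omega
    rw [hsplit, pow_add, ← mul_assoc]
    have : ((2 ^ (tau y k - k) : ℕ) : ℝ≥0∞) * (2 : ℝ≥0∞)⁻¹ ^ (tau y k - k) = 1 := by
      push_cast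
      rw [← mul_pow, ENNReal.mul_inv_cancel (by norm_num) (by norm_num), one_pow]
    rw [this, one_mul, hk]

lemma map_sel_eq (lam : Measure (ℕ → Bool)) [IsProbabilityMeasure lam]
    (hlam : ∀ s : List Bool, lam (cyl s) = (2 : ℝ≥0∞)⁻¹ ^ s.length) :
    lam.map (fun x => selSeq x y) = lam := by
  have hm : Measurable (fun x : ℕ → Bool => selSeq x y) :=
    measurable_pi_lambda _ fun j => measurable_pi_apply (tau y j)
  haveI : IsProbabilityMeasure (lam.map (fun x => selSeq x y)) :=
    Measure.isProbabilityMeasure_map hm.aemeasurable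
  refine ext_of_generate_finite (Set.range cyl) generate_cyl isPiSystem_cyl ?_ ?_
  · rintro _ ⟨s, rfl⟩
    rw [Measure.map_apply hm (measurableSet_cyl s), measure_sel_cyl hy lam hlam, hlam]
  · simp

end Tau

section Key

variable {y : ℕ → Bool} (hy : {i | y i = true}.Infinite)
include hy

/-- The relativized test. -/
def selTest (y : ℕ → Bool) (U : Set (ℕ × List Bool)) : Set (ℕ × List Bool) :=
  {p : ℕ × List Bool | ∃ s : List Bool, (p.1, s) ∈ U ∧
    p.2.length = (if s.length = 0 then 0 else tau y (s.length - 1) + 1) ∧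
    ∀ j < s.length, p.2.getD (tau y j) false = s.getD j false}

lemma key (U : Set (ℕ × List Bool)) (n : ℕ) (x : ℕ → Bool) :
    x ∈ lvl (selTest y U) n ↔ selSeq x y ∈ lvl U n := by
  simp only [lvl, Set.mem_iUnion, Set.mem_setOf_eq, exists_prop]
  constructor
  · rintro ⟨a, ⟨s, hsU, hlen, hcm⟩, hxa⟩
    refine ⟨s, hsU, ?_⟩
    intro j hj
    have h0 : s.length ≠ 0 := by omega
    obtain ⟨k, hk⟩ := Nat.exists_eq_succ_of_ne_zero h0
    have hjk : j ≤ k := by omega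
    have hlen' : a.length = tau y k + 1 := by
      rw [hlen, if_neg h0, hk]; simp
    have htlt : tau y j < a.length := by
      have := tau_le_tau hy hjk
      omega
    have := hxa (tau y j) htlt
    rw [hcm j hj] at this
    exact this
  · rintro ⟨s, hsU, hxs⟩
    set L := if s.length = 0 then 0 else tau y (s.length - 1) + 1 with hL
    refine ⟨List.ofFn (fun i : Fin L => x i), ⟨s, hsU, by rw [List.length_ofFn], ?_⟩, ?_⟩
    · intro j hj
      have h0 : s.length ≠ 0 := by omega
      have htlt : tau y j < L := by
        rw [hL, if_neg h0]
        have := tau_le_tau hy (show j ≤ s.length - 1 by omega)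
        omega
      rw [list_getD_ofFn _ htlt]
      exact hxs j hj
    · intro i hi
      rw [List.length_ofFn] at hi
      rw [list_getD_ofFn _ hi]

lemma selTest_mono (U : Set (ℕ × List Bool)) (hU : ∀ n, lvl U (n + 1) ⊆ lvl U n) (n : ℕ) :
    lvl (selTest y U) (n + 1) ⊆ lvl (selTest y U) n := by
  intro x hx
  rw [key hy] at hx ⊢
  exact hU n hx

lemma selTest_measure (lam : Measure (ℕ → Bool)) [IsProbabilityMeasure lam]
    (hlam : ∀ s : List Bool, lam (cyl s) = (2 : ℝ≥0∞)⁻¹ ^ s.length)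
    (U : Set (ℕ × List Bool)) (n : ℕ) :
    lam (lvl (selTest y U) n) = lam (lvl U n) := by
  have hset : lvl (selTest y U) n = (fun x => selSeq x y) ⁻¹' lvl U n := by
    ext x; exact key hy U n x
  have hm : Measurable (fun x : ℕ → Bool => selSeq x y) :=
    measurable_pi_lambda _ fun j => measurable_pi_apply (tau y j)
  rw [hset, ← Measure.map_apply hm (measurableSet_lvl U n), map_sel_eq hy lam hlam]

end Key

section Comp

variable {y : ℕ → Bool}

/-- Count of ones below `n`, as a `Nat.rec`. -/
def cntF (y : ℕ → Bool) : ℕ → ℕ := fun n => n.rec 0 (fun i ih => ih + cond (y i) 1 0)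

lemma cntF_eq (n : ℕ) : cntF y n = Nat.count (fun i => y i = true) n := by
  induction n with
  | zero => rfl
  | succ n ih =>
    have h1 : cntF y (n + 1) = cntF y n + cond (y n) 1 0 := rfl
    rw [h1, ih, Nat.count_succ]
    cases h : y n <;> simp [h]

lemma cntF_computable (hcomp : Computable y) : Computable (cntF y) := by
  have h2 : Computable₂ (fun (_ : ℕ) (q : ℕ × ℕ) => q.2 + cond (y q.1) 1 0) :=
    Computable₂.mk <|
      Primrec.nat_add.to_comp.comp (Computable.snd.comp Computable.snd)
        (Computable.cond (hcomp.comp (Computable.fst.comp Computable.snd))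
          (Computable.const 1) (Computable.const 0))
  exact (Computable.nat_rec Computable.id (Computable.const 0) h2).of_eq fun n => rfl

lemma tau_computable (hcomp : Computable y) (hy : {i | y i = true}.Infinite) :
    Computable (tau y) := by
  have hpr : Computable fun p : ℕ × ℕ => (y p.2 && (cntF y p.2 == p.1) : Bool) := by
    have hb : Computable₂ (fun (a b : ℕ) => (a == b : Bool)) := Primrec.beq.to_comp
    exact (Computable.cond (hcomp.comp Computable.snd)
      (hb.comp ((cntF_computable hcomp).comp Computable.snd) Computable.fst)
      (Computable.const false)).of_eq fun p => by cases h : y p.2 <;> simp [h]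
  have hrf : Partrec fun j => Nat.rfind fun i =>
      (fun i => Part.some (y i && (cntF y i == j))) i :=
    Partrec.rfind hpr.partrec.to₂
  refine Partrec.of_eq_tot hrf fun j => ?_
  refine Nat.mem_rfind.2 ⟨?_, ?_⟩
  · refine Part.mem_some_iff.2 ?_
    symm
    simp [tau_mem hy, cntF_eq, count_tau hy]
  · intro m hm
    refine Part.mem_some_iff.2 ?_
    symm
    cases hb : (y m && (cntF y m == j)) with
    | false => rfl
    | true =>
      exfalso
      rw [Bool.and_eq_true, beq_iff_eq, cntF_eq] at hb
      have := tau_count (y := y) hb.1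
      rw [hb.2] at this
      omega

/-- Builds the string of selected bits of length `m` from a string `a`. -/
noncomputable def Fl (y : ℕ → Bool) (q : List Bool × ℕ) : List Bool :=
  q.2.rec [] (fun j ih => ih ++ [q.1.getD (tau y j) false])

lemma Fl_succ (a : List Bool) (m : ℕ) :
    Fl y (a, m + 1) = Fl y (a, m) ++ [a.getD (tau y m) false] := rfl

lemma Fl_length (a : List Bool) (m : ℕ) : (Fl y (a, m)).length = m := by
  induction m with
  | zero => rfl
  | succ m ih => rw [Fl_succ, List.length_append, ih]; rfl

lemma Fl_getD (a : List Bool) (m : ℕ) {j : ℕ} (hj : j < m) :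
    (Fl y (a, m)).getD j false = a.getD (tau y j) false := by
  induction m with
  | zero => omega
  | succ m ih =>
    rw [Fl_succ]
    rcases lt_or_eq_of_le (Nat.lt_succ_iff.mp hj) with h | h
    · rw [List.getD_append _ _ _ _ (by rw [Fl_length]; exact h)]
      exact ih h
    · subst h
      rw [List.getD_append_right _ _ _ _ (by rw [Fl_length])]
      rw [Fl_length]
      simp

lemma Fl_computable (hcomp : Computable y) (hy : {i | y i = true}.Infinite) :
    Computable (Fl y) := by
  have htau := tau_computable hcomp hy
  have hval : Computable fun p : (List Bool × ℕ) × ℕ × List Bool =>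
      p.1.1.getD (tau y p.2.1) false :=
    (Primrec.list_getD false).to_comp.comp (Computable.fst.comp Computable.fst)
      (htau.comp (Computable.fst.comp Computable.snd))
  have h2 : Computable₂ (fun (q : List Bool × ℕ) (r : ℕ × List Bool) =>
      r.2 ++ [q.1.getD (tau y r.1) false]) :=
    Computable₂.mk <|
      Primrec.list_append.to_comp.comp (Computable.snd.comp Computable.snd)
        (Primrec.list_cons.to_comp.comp hval (Computable.const []))
  exact (Computable.nat_rec Computable.snd (Computable.const []) h2).of_eq fun q => rfl

/-- The search function for the relativized test. -/
noncomputable def selS (y : ℕ → Bool) (q : ℕ × List Bool) : Option (ℕ × List Bool) :=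
  cond (decide (q.2.length = 0)) (some (q.1, []))
    (cond (y (q.2.length - 1))
      (some (q.1, Fl y (q.2, cntF y (q.2.length - 1) + 1))) none)

lemma selS_computable (hcomp : Computable y) (hy : {i | y i = true}.Infinite) :
    Computable (selS y) := by
  have hlen : Computable fun q : ℕ × List Bool => q.2.length :=
    Primrec.list_length.to_comp.comp Computable.snd
  have hc1 : Computable fun q : ℕ × List Bool => decide (q.2.length = 0) :=
    (Primrec₂.to_comp Primrec.eq.decide).comp hlen (Computable.const 0)
  have hc2 : Computable fun q : ℕ × List Bool => y (q.2.length - 1) :=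
    hcomp.comp (Computable.pred.comp hlen)
  have hb1 : Computable fun q : ℕ × List Bool => (some (q.1, []) : Option (ℕ × List Bool)) :=
    Primrec.option_some.to_comp.comp (Computable.fst.pair (Computable.const []))
  have hb2 : Computable fun q : ℕ × List Bool =>
      (some (q.1, Fl y (q.2, cntF y (q.2.length - 1) + 1)) : Option (ℕ × List Bool)) :=
    Primrec.option_some.to_comp.comp (Computable.fst.pair
      ((Fl_computable hcomp hy).comp (Computable.snd.pair
        (Computable.succ.comp ((cntF_computable hcomp).comp (Computable.pred.comp hlen))))))
  exact Computable.cond hc1 hb1 (Computable.cond hc2 hb2 (Computable.const none))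

lemma selTest_re (hcomp : Computable y) (hy : {i | y i = true}.Infinite)
    (U : Set (ℕ × List Bool)) (hre : REset U) : REset (selTest y U) := by
  obtain ⟨f, hf, hmem⟩ := hre
  refine ⟨fun q => (selS y q : Part (ℕ × List Bool)).bind f, ?_, ?_⟩
  · exact (Computable.ofOption (selS_computable hcomp hy)).bind (hf.comp Computable.snd)
  · rintro ⟨n, a⟩
    constructor
    · rintro ⟨s, hsU, hlen, hcm⟩
      by_cases h0 : s.length = 0
      · have ha0 : a.length = 0 := by rw [hlen, if_pos h0]
        have hs : s = [] := List.length_eq_zero_iff.mp h0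
        have hSq : selS y (n, a) = some (n, []) := by simp [selS, ha0]
        show ((selS y (n, a) : Part (ℕ × List Bool)).bind f).Dom
        rw [hSq, Part.coe_some]; erw [Part.bind_some]
        exact (hmem (n, [])).mp (hs ▸ hsU)
      · obtain ⟨k, hk⟩ := Nat.exists_eq_succ_of_ne_zero h0
        have ha : a.length = tau y k + 1 := by rw [hlen, if_neg h0, hk]; simp
        have hy1 : y (a.length - 1) = true := by
          rw [ha]; simpa using tau_mem hy k
        have hcnt : cntF y (a.length - 1) = k := by
          rw [ha]; simp [cntF_eq, count_tau hy]
        have hFl : Fl y (a, cntF y (a.length - 1) + 1) = s := by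
          rw [hcnt]
          refine list_eq_of_getD ?_ ?_
          · rw [Fl_length, hk]
          · intro j hj
            rw [Fl_length] at hj
            rw [Fl_getD _ _ hj, hcm j (by omega)]
        have hcnt' : cntF y (tau y k) = k := by rw [cntF_eq, count_tau hy]
        have hFl' : Fl y (a, k + 1) = s := hcnt ▸ hFl
        have hSq : selS y (n, a) = some (n, s) := by
          simp [selS, ha, tau_mem hy k, hcnt', hFl']
        show ((selS y (n, a) : Part (ℕ × List Bool)).bind f).Dom
        rw [hSq, Part.coe_some]; erw [Part.bind_some]
        exact (hmem _).mp hsU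
    · intro hdom
      rw [show ((fun q => (selS y q : Part (ℕ × List Bool)).bind f) (n, a)) =
        ((selS y (n, a) : Part (ℕ × List Bool)).bind f) from rfl] at hdom
      by_cases ha0 : a.length = 0
      · have hSq : selS y (n, a) = some (n, []) := by simp [selS, ha0]
        rw [hSq, Part.coe_some] at hdom; erw [Part.bind_some] at hdom
        exact ⟨[], (hmem _).mpr hdom, by simpa using ha0, by simp⟩
      · by_cases hy1 : y (a.length - 1) = true
        · set k := cntF y (a.length - 1) with hkdef
          have hcntk : k = Nat.count (fun i => y i = true) (a.length - 1) := cntF_eq _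
          have htk : tau y k = a.length - 1 := by rw [hcntk]; exact tau_count hy1
          have hSq : selS y (n, a) = some (n, Fl y (a, k + 1)) := by
            simp [selS, ha0, hy1, ← hkdef]
          rw [hSq, Part.coe_some] at hdom; erw [Part.bind_some] at hdom
          refine ⟨Fl y (a, k + 1), (hmem _).mpr hdom, ?_, ?_⟩
          · rw [Fl_length]
            rw [if_neg (by omega)]
            simp only [Nat.add_sub_cancel]
            rw [htk]
            omega
          · intro j hj
            rw [Fl_length] at hj
            rw [Fl_getD _ _ hj]
        · have hSq : selS y (n, a) = none := by
            simp [selS, ha0, hy1]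
          rw [hSq] at hdom
          simp [Part.ofOption] at hdom
          erw [Part.bind_none] at hdom
          exact absurd hdom Part.not_none_dom

end Comp

/-- Relativization of a test along selection by a computable `y`: `U^y` is again a
Martin-Löf test, and `x ∈ Ũ^y_n ↔ x/y ∈ Ũ_n`. -/
theorem selected_test_is_test
    (lam : Measure (ℕ → Bool)) [IsProbabilityMeasure lam]
    (hlam : ∀ s : List Bool, lam (cyl s) = (2 : ℝ≥0∞)⁻¹ ^ s.length)
    (y : ℕ → Bool) (hcomp : Computable y) (hy : {i | y i = true}.Infinite)
    (U : Set (ℕ × List Bool)) (hU : MLTest lam U) :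
    MLTest lam
      {p : ℕ × List Bool | ∃ s : List Bool, (p.1, s) ∈ U ∧
        p.2.length = (if s.length = 0 then 0 else tau y (s.length - 1) + 1) ∧
        ∀ j < s.length, p.2.getD (tau y j) false = s.getD j false} ∧
    ∀ (x : ℕ → Bool) (n : ℕ),
      x ∈ lvl {p : ℕ × List Bool | ∃ s : List Bool, (p.1, s) ∈ U ∧
          p.2.length = (if s.length = 0 then 0 else tau y (s.length - 1) + 1) ∧
          ∀ j < s.length, p.2.getD (tau y j) false = s.getD j false} n
        ↔ selSeq x y ∈ lvl U n := by
  obtain ⟨hre, hmono, hmeas⟩ := hU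
  have hVeq : {p : ℕ × List Bool | ∃ s : List Bool, (p.1, s) ∈ U ∧
      p.2.length = (if s.length = 0 then 0 else tau y (s.length - 1) + 1) ∧
      ∀ j < s.length, p.2.getD (tau y j) false = s.getD j false} = selTest y U := rfl
  rw [hVeq]
  constructor
  · refine ⟨selTest_re hcomp hy U hre, selTest_mono hy U hmono, ?_⟩
    intro n
    rw [selTest_measure hy lam hlam U n]
    exact hmeas n
  · intro x n
    exact key hy U n x
end

section
/- Suppose lim_n K(y_1^n)/n = 0, lim_n (1/n)Σ_{i=1}^n y_i = d with 0 < d < 1, and lim_n K(x_1^n)/n = 1. Then lim_n K(x_1^n/y_1^n | y_1^n)/n₁ = 1 and lim_n K(x_1^n/ȳ_1^n | y_1^n)/(n − n₁) = 1, where n₁ = Σ_{i=1}^n y_i and ȳ is the bitwise complement of y. -/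
open Filter

/-- Subsequence of the string `x` at the positions where `y` is `true`. -/
def selT (x y : List Bool) : List Bool :=
  ((x.zip y).filter (fun p => p.2)).map Prod.fst

/-- Subsequence of the string `x` at the positions where `y` is `false`. -/
def selF (x y : List Bool) : List Bool :=
  ((x.zip y).filter (fun p => !p.2)).map Prod.fst

lemma selT_length : ∀ u w : List Bool, u.length = w.length →
    (selT u w).length = w.count true := by
  intro u
  induction u with
  | nil => intro w h; cases w <;> simp_all [selT]
  | cons a u ih =>
    intro w h
    cases w with
    | nil => simp at h
    | cons b w =>
      simp at h
      cases b <;> simp [selT, List.count_cons, ← ih w h]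

lemma selF_length : ∀ u w : List Bool, u.length = w.length →
    (selF u w).length = w.length - w.count true := by
  intro u
  induction u with
  | nil => intro w h; cases w <;> simp_all [selF]
  | cons a u ih =>
    intro w h
    cases w with
    | nil => simp at h
    | cons b w =>
      simp at h
      have hle : w.count true ≤ w.length := List.count_le_length
      have h2 := ih w h
      simp [selF] at h2 ⊢
      cases b <;> simp [List.count_cons, h2] <;> omega

lemma log_div_tendsto : Tendsto (fun n : ℕ => Real.logb 2 ((n:ℝ)+2) / n) atTop (nhds 0) := by
  have h1 : Tendsto (fun n : ℕ => ((n:ℝ)+2)) atTop atTop :=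
    tendsto_atTop_add_const_right _ 2 tendsto_natCast_atTop_atTop
  have h2 : (fun n : ℕ => Real.log ((n:ℝ)+2)) =o[atTop] (fun n : ℕ => ((n:ℝ)+2)) :=
    (Real.isLittleO_log_id_atTop).comp_tendsto h1
  have h3 : (fun n : ℕ => ((n:ℝ)+2)) =O[atTop] (fun n : ℕ => (n:ℝ)) := by
    apply Asymptotics.IsBigO.of_bound 3
    filter_upwards [eventually_ge_atTop 1] with n hn
    have : (1:ℝ) ≤ n := by exact_mod_cast hn
    simp only [Real.norm_eq_abs]
    rw [abs_of_nonneg (by linarith), abs_of_nonneg (by linarith)]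
    linarith
  have h4 := (h2.trans_isBigO h3).tendsto_div_nhds_zero
  have : (fun n : ℕ => Real.logb 2 ((n:ℝ)+2) / n)
      = fun n : ℕ => (Real.log ((n:ℝ)+2) / n) * (Real.log 2)⁻¹ := by
    funext n; rw [Real.logb]; ring
  rw [this]
  simpa using h4.mul_const (Real.log 2)⁻¹

/-- `(c * logb 2 (n+2) + c') / n → 0`. -/
lemma err_tendsto (c c' : ℝ) :
    Tendsto (fun n : ℕ => (c * Real.logb 2 ((n:ℝ)+2) + c') / n) atTop (nhds 0) := by
  have h1 := (log_div_tendsto.const_mul c).add (tendsto_const_div_atTop_nhds_zero_nat c')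
  simp only [mul_zero, add_zero] at h1
  refine h1.congr fun n => ?_
  ring

/-- Proposition 2, (i) ⇒ (ii), with density `0 < d < 1`.  Here `K` is prefix
complexity, `CK` conditional prefix complexity and `K2` conditional prefix
complexity of pairs; the standard complexity facts are taken as hypotheses:
conditioning changes `K` by at most `K` of the condition; splitting a string
into its selected and unselected parts preserves conditional complexity up to
`O(1)`; subadditivity up to `O(log)`; and the length upper bound up to `O(log)`. -/
theorem selected_complexity_rate_one_of_zero_rate_selector
    (K : List Bool → ℕ) (CK : List Bool → List Bool → ℕ)
    (K2 : List Bool × List Bool → List Bool → ℕ)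
    (F1 : ∃ c : ℕ, ∀ u w : List Bool,
      (K u : ℤ) - CK u w ≤ K w + c ∧ (CK u w : ℤ) - K u ≤ K w + c)
    (F2 : ∃ c : ℕ, ∀ u w : List Bool, u.length = w.length →
      (CK u w : ℤ) - K2 (selT u w, selF u w) w ≤ c ∧
      (K2 (selT u w, selF u w) w : ℤ) - CK u w ≤ c)
    (F3 : ∃ c : ℕ, ∀ u v w : List Bool,
      (K2 (u, v) w : ℝ) ≤ CK u w + CK v w
        + c * Real.logb 2 (u.length + v.length + 2) + c)
    (F4 : ∃ c : ℕ, ∀ u w : List Bool,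
      (CK u w : ℝ) ≤ u.length + c * Real.logb 2 (u.length + 2) + c)
    (x y : ℕ → Bool) (d : ℝ) (hd0 : 0 < d) (hd1 : d < 1)
    (hdens : Tendsto (fun n => ((pref y n).count true : ℝ) / n) atTop (nhds d))
    (hy : Tendsto (fun n => (K (pref y n) : ℝ) / n) atTop (nhds 0))
    (hx : Tendsto (fun n => (K (pref x n) : ℝ) / n) atTop (nhds 1)) :
    Tendsto (fun n => (CK (selT (pref x n) (pref y n)) (pref y n) : ℝ)
        / ((pref y n).count true : ℝ)) atTop (nhds 1) ∧
    Tendsto (fun n => (CK (selF (pref x n) (pref y n)) (pref y n) : ℝ)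
        / ((n : ℝ) - (pref y n).count true)) atTop (nhds 1) := by
  obtain ⟨c1, hF1⟩ := F1
  obtain ⟨c2, hF2⟩ := F2
  obtain ⟨c3, hF3⟩ := F3
  obtain ⟨c4, hF4⟩ := F4
  -- abbreviations
  set t : ℕ → ℕ := fun n => (pref y n).count true with ht
  have hpl : ∀ n, (pref y n).length = n := fun n => by simp [pref]
  have hxl : ∀ n, (pref x n).length = n := fun n => by simp [pref]
  have hlen : ∀ n, (pref x n).length = (pref y n).length := fun n => by
    rw [hpl, hxl]
  have htle : ∀ n, t n ≤ n := fun n => by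
    simpa [hpl n] using (List.count_le_length (a := true) (l := pref y n))
  have hlenT : ∀ n, (selT (pref x n) (pref y n)).length = t n := fun n =>
    selT_length _ _ (hlen n)
  have hlenF : ∀ n, (selF (pref x n) (pref y n)).length = n - t n := fun n => by
    rw [selF_length _ _ (hlen n), hpl]
  have hb2 : (1:ℝ) < 2 := one_lt_two
  -- upper bound on CK selT
  have hub : ∀ n : ℕ, (CK (selT (pref x n) (pref y n)) (pref y n) : ℝ)
      ≤ (t n : ℝ) + (c4 : ℝ) * Real.logb 2 ((n:ℝ)+2) + c4 := by
    intro n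
    have h := hF4 (selT (pref x n) (pref y n)) (pref y n)
    rw [hlenT] at h
    have hmono : Real.logb 2 ((t n : ℝ) + 2) ≤ Real.logb 2 ((n:ℝ)+2) := by
      apply Real.logb_le_logb_of_le hb2 (by positivity)
      have : (t n : ℝ) ≤ n := by exact_mod_cast htle n
      linarith
    have : (c4:ℝ) * Real.logb 2 ((t n : ℝ) + 2) ≤ (c4:ℝ) * Real.logb 2 ((n:ℝ)+2) :=
      mul_le_mul_of_nonneg_left hmono (by positivity)
    push_cast at h
    linarith
  -- upper bound on CK selF
  have hubF : ∀ n : ℕ, (CK (selF (pref x n) (pref y n)) (pref y n) : ℝ)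
      ≤ ((n:ℝ) - t n) + (c4 : ℝ) * Real.logb 2 ((n:ℝ)+2) + c4 := by
    intro n
    have h := hF4 (selF (pref x n) (pref y n)) (pref y n)
    rw [hlenF] at h
    have hc : ((n - t n : ℕ) : ℝ) = (n:ℝ) - t n := by
      push_cast [htle n]; ring
    rw [hc] at h
    have hmono : Real.logb 2 (((n:ℝ) - t n) + 2) ≤ Real.logb 2 ((n:ℝ)+2) := by
      apply Real.logb_le_logb_of_le hb2
      · have : (t n : ℝ) ≤ n := by exact_mod_cast htle n
        linarith
      · have : (0:ℝ) ≤ t n := by positivity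
        linarith
    have : (c4:ℝ) * Real.logb 2 (((n:ℝ) - t n) + 2) ≤ (c4:ℝ) * Real.logb 2 ((n:ℝ)+2) :=
      mul_le_mul_of_nonneg_left hmono (by positivity)
    linarith
  -- main lower bound chain
  have hkey : ∀ n : ℕ, (K (pref x n) : ℝ)
      ≤ (CK (selT (pref x n) (pref y n)) (pref y n) : ℝ)
        + CK (selF (pref x n) (pref y n)) (pref y n)
        + K (pref y n) + ((c1:ℝ) + c2 + c3) + (c3:ℝ) * Real.logb 2 ((n:ℝ)+2) := by
    intro n
    have h1 : (K (pref x n) : ℝ) ≤ CK (pref x n) (pref y n) + K (pref y n) + c1 := by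
      have := (hF1 (pref x n) (pref y n)).1
      have h' : (K (pref x n) : ℝ) - CK (pref x n) (pref y n)
          ≤ K (pref y n) + c1 := by exact_mod_cast this
      linarith
    have h2 : (CK (pref x n) (pref y n) : ℝ)
        ≤ K2 (selT (pref x n) (pref y n), selF (pref x n) (pref y n)) (pref y n) + c2 := by
      have := (hF2 (pref x n) (pref y n) (hlen n)).1
      have h' : (CK (pref x n) (pref y n) : ℝ)
          - K2 (selT (pref x n) (pref y n), selF (pref x n) (pref y n)) (pref y n)
          ≤ c2 := by exact_mod_cast this
      linarith
    have h3 := hF3 (selT (pref x n) (pref y n)) (selF (pref x n) (pref y n)) (pref y n)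
    have harg : ((selT (pref x n) (pref y n)).length : ℝ)
        + (selF (pref x n) (pref y n)).length + 2 = (n:ℝ) + 2 := by
      rw [hlenT, hlenF]
      push_cast [htle n]
      ring
    rw [harg] at h3
    linarith
  -- eventually positive n
  have hnpos : ∀ᶠ n : ℕ in atTop, (0:ℝ) < n := by
    filter_upwards [eventually_ge_atTop 1] with n hn
    exact_mod_cast Nat.lt_of_lt_of_le Nat.zero_lt_one hn
  -- (n - t n)/n → 1 - d
  have hsub : Tendsto (fun n : ℕ => ((n:ℝ) - t n) / n) atTop (nhds (1 - d)) := by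
    have h1 : Tendsto (fun n : ℕ => 1 - (t n : ℝ)/n) atTop (nhds (1 - d)) :=
      tendsto_const_nhds.sub hdens
    refine Tendsto.congr' ?_ h1
    filter_upwards [hnpos] with n hn
    field_simp
  -- CK selT / n → d
  have hAT : Tendsto (fun n : ℕ =>
      (CK (selT (pref x n) (pref y n)) (pref y n) : ℝ) / n) atTop (nhds d) := by
    have hU : Tendsto (fun n : ℕ => (t n : ℝ)/n
        + ((c4:ℝ) * Real.logb 2 ((n:ℝ)+2) + c4)/n) atTop (nhds d) := by
      have := hdens.add (err_tendsto (c4:ℝ) (c4:ℝ))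
      simpa using this
    have hL : Tendsto (fun n : ℕ => (K (pref x n) : ℝ)/n - (K (pref y n) : ℝ)/n
        - ((n:ℝ) - t n)/n
        - (((c3:ℝ)+c4) * Real.logb 2 ((n:ℝ)+2) + ((c1:ℝ)+c2+c3+c4))/n)
        atTop (nhds d) := by
      have := ((hx.sub hy).sub hsub).sub (err_tendsto ((c3:ℝ)+c4) ((c1:ℝ)+c2+c3+c4))
      have he : (1:ℝ) - 0 - (1 - d) - 0 = d := by ring
      rwa [he] at this
    refine tendsto_of_tendsto_of_tendsto_of_le_of_le' hL hU ?_ ?_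
    · filter_upwards [hnpos] with n hn
      have hineq : (K (pref x n) : ℝ) - K (pref y n) - ((n:ℝ) - t n)
          - (((c3:ℝ)+c4) * Real.logb 2 ((n:ℝ)+2) + ((c1:ℝ)+c2+c3+c4))
          ≤ CK (selT (pref x n) (pref y n)) (pref y n) := by
        have h1 := hkey n
        have h2 := hubF n
        linarith
      have := div_le_div_of_nonneg_right hineq hn.le
      calc (K (pref x n) : ℝ)/n - (K (pref y n) : ℝ)/n - ((n:ℝ) - t n)/n
            - (((c3:ℝ)+c4) * Real.logb 2 ((n:ℝ)+2) + ((c1:ℝ)+c2+c3+c4))/n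
          = ((K (pref x n) : ℝ) - K (pref y n) - ((n:ℝ) - t n)
            - (((c3:ℝ)+c4) * Real.logb 2 ((n:ℝ)+2) + ((c1:ℝ)+c2+c3+c4)))/n := by
            ring
        _ ≤ _ := this
    · filter_upwards [hnpos] with n hn
      have hineq := hub n
      have := div_le_div_of_nonneg_right hineq hn.le
      calc (CK (selT (pref x n) (pref y n)) (pref y n) : ℝ)/n
          ≤ ((t n : ℝ) + (c4:ℝ) * Real.logb 2 ((n:ℝ)+2) + c4)/n := this
        _ = (t n : ℝ)/n + ((c4:ℝ) * Real.logb 2 ((n:ℝ)+2) + c4)/n := by ring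
  -- CK selF / n → 1 - d
  have hBT : Tendsto (fun n : ℕ =>
      (CK (selF (pref x n) (pref y n)) (pref y n) : ℝ) / n) atTop (nhds (1 - d)) := by
    have hU : Tendsto (fun n : ℕ => ((n:ℝ) - t n)/n
        + ((c4:ℝ) * Real.logb 2 ((n:ℝ)+2) + c4)/n) atTop (nhds (1 - d)) := by
      have := hsub.add (err_tendsto (c4:ℝ) (c4:ℝ))
      simpa using this
    have hL : Tendsto (fun n : ℕ => (K (pref x n) : ℝ)/n - (K (pref y n) : ℝ)/n
        - (t n : ℝ)/n
        - (((c3:ℝ)+c4) * Real.logb 2 ((n:ℝ)+2) + ((c1:ℝ)+c2+c3+c4))/n)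
        atTop (nhds (1 - d)) := by
      have := ((hx.sub hy).sub hdens).sub (err_tendsto ((c3:ℝ)+c4) ((c1:ℝ)+c2+c3+c4))
      have he : (1:ℝ) - 0 - d - 0 = 1 - d := by ring
      rwa [he] at this
    refine tendsto_of_tendsto_of_tendsto_of_le_of_le' hL hU ?_ ?_
    · filter_upwards [hnpos] with n hn
      have hineq : (K (pref x n) : ℝ) - K (pref y n) - (t n : ℝ)
          - (((c3:ℝ)+c4) * Real.logb 2 ((n:ℝ)+2) + ((c1:ℝ)+c2+c3+c4))
          ≤ CK (selF (pref x n) (pref y n)) (pref y n) := by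
        have h1 := hkey n
        have h2 := hub n
        linarith
      have := div_le_div_of_nonneg_right hineq hn.le
      calc (K (pref x n) : ℝ)/n - (K (pref y n) : ℝ)/n - (t n : ℝ)/n
            - (((c3:ℝ)+c4) * Real.logb 2 ((n:ℝ)+2) + ((c1:ℝ)+c2+c3+c4))/n
          = ((K (pref x n) : ℝ) - K (pref y n) - (t n : ℝ)
            - (((c3:ℝ)+c4) * Real.logb 2 ((n:ℝ)+2) + ((c1:ℝ)+c2+c3+c4)))/n := by
            ring
        _ ≤ _ := this
    · filter_upwards [hnpos] with n hn
      have hineq := hubF n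
      have := div_le_div_of_nonneg_right hineq hn.le
      calc (CK (selF (pref x n) (pref y n)) (pref y n) : ℝ)/n
          ≤ (((n:ℝ) - t n) + (c4:ℝ) * Real.logb 2 ((n:ℝ)+2) + c4)/n := this
        _ = ((n:ℝ) - t n)/n + ((c4:ℝ) * Real.logb 2 ((n:ℝ)+2) + c4)/n := by ring
  constructor
  · -- eventually t n > 0
    have htpos : ∀ᶠ n : ℕ in atTop, (0:ℝ) < (t n : ℝ)/n :=
      hdens.eventually (eventually_gt_nhds hd0)
    have h := hAT.div hdens (ne_of_gt hd0)
    rw [div_self (ne_of_gt hd0)] at h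
    refine Tendsto.congr' ?_ h
    filter_upwards [hnpos, htpos] with n hn htn
    have htn' : (0:ℝ) < (t n : ℝ) := by
      by_contra hc
      push_neg at hc
      have : (t n : ℝ)/n ≤ 0 := div_nonpos_of_nonpos_of_nonneg hc (le_of_lt hn)
      linarith
    simp only [Pi.div_apply]
    field_simp
  · have hd1' : (0:ℝ) < 1 - d := by linarith
    have htpos : ∀ᶠ n : ℕ in atTop, (0:ℝ) < ((n:ℝ) - t n)/n :=
      hsub.eventually (eventually_gt_nhds hd1')
    have h := hBT.div hsub (ne_of_gt hd1')
    rw [div_self (ne_of_gt hd1')] at h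
    refine Tendsto.congr' ?_ h
    filter_upwards [hnpos, htpos] with n hn htn
    have htn' : (0:ℝ) < (n:ℝ) - t n := by
      by_contra hc
      push_neg at hc
      have : ((n:ℝ) - t n)/n ≤ 0 := div_nonpos_of_nonpos_of_nonneg hc (le_of_lt hn)
      linarith
    simp only [Pi.div_apply]
    have hn' : (n:ℝ) ≠ 0 := ne_of_gt hn
    have ht' : (n:ℝ) - t n ≠ 0 := ne_of_gt htn'
    rw [div_div_div_cancel_right₀]
    exact hn'
end

section
/- Let z be an infinite binary sequence computable from y (via a total computable functional), let n₁(n) = Σ_{i=1}^n y_i with lim_n n₁(n)/n > 0, and suppose each prefix z_1^{l_n} is computable from y_1^n with lim_n l_n/n > 0. Then limsup_n K(z_1^n/y_1^n | y_1^n)/n₁(n) < 1. -/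
open Filter

/-- `z` is computable from `y` via a total computable monotone functional with
unbounded output. -/
def ComputableFrom (z y : ℕ → Bool) : Prop :=
  ∃ g : List Bool → List Bool, Computable g ∧
    (∀ n, g (pref y n) <+: g (pref y (n + 1))) ∧
    (∀ m, ∃ n, m ≤ (g (pref y n)).length) ∧
    (∀ n, g (pref y n) = pref z (g (pref y n)).length)

lemma pref_length (y : ℕ → Bool) (n : ℕ) : (pref y n).length = n := by
  simp [pref]

lemma pref_prefix (y : ℕ → Bool) {m n : ℕ} (h : m ≤ n) : pref y m <+: pref y n := by
  refine List.prefix_iff_eq_take.mpr ?_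
  apply List.ext_getElem <;> simp [pref, h, Nat.min_eq_left, *]

lemma zip_pref (z y : ℕ → Bool) (a b : ℕ) :
    (pref z a).zip (pref y b) = (pref z (min a b)).zip (pref y (min a b)) := by
  apply List.ext_getElem
  · simp [pref_length]
  · intro i h1 h2
    simp only [List.getElem_zip]
    simp only [pref, List.getElem_ofFn]

lemma prefix_zip {a b c d : List Bool} (h1 : a <+: b) (h2 : c <+: d)
    (h : a.length = c.length) : a.zip c <+: b.zip d := by
  obtain ⟨r, rfl⟩ := h1
  obtain ⟨s, rfl⟩ := h2
  rw [List.zip_append h]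
  exact ⟨r.zip s, rfl⟩

lemma selT_mono {a b c d : List Bool} (h1 : a <+: b) (h2 : c <+: d)
    (h : a.length = c.length) : selT a c <+: selT b d := by
  exact ((prefix_zip h1 h2 h).filter _).map _

lemma selT_length_s16 : ∀ (x y : List Bool), x.length = y.length →
    (selT x y).length = y.count true
  | [], [], _ => by simp [selT]
  | a :: x, b :: y, h => by
    simp only [List.length_cons, Nat.add_right_cancel_iff] at h
    have := selT_length_s16 x y h
    cases b <;> simp [selT, List.count_cons] at this ⊢ <;> omega

lemma selT_eq_filterMap : ∀ (x y : List Bool), selT x y =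
    (List.range (min x.length y.length)).filterMap
      (fun i => if y.getD i false then some (x.getD i false) else none)
  | [], y => by simp [selT]
  | a :: x, [] => by simp [selT]
  | a :: x, b :: y => by
    have ih := selT_eq_filterMap x y
    simp only [selT, List.zip_cons_cons, List.filter_cons, List.length_cons,
      Nat.succ_min_succ, List.range_succ_eq_map, List.filterMap_cons,
      List.filterMap_map] at *
    simp only [List.getD] at ih
    cases b <;>
      simp [Function.comp_def, List.getD_cons_zero, List.getD_cons_succ, ← ih, selT,
        List.getD] <;> exact ih

lemma primrec_selT : Primrec (fun p : List Bool × List Bool => selT p.1 p.2) := by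
  have h1 : Primrec (fun p : List Bool × List Bool =>
      (List.range (min p.1.length p.2.length)).filterMap
        (fun i => bif p.2.getD i false then some (p.1.getD i false) else none)) := by
    apply Primrec.listFilterMap
    · exact Primrec.list_range.comp (Primrec.nat_min.comp
        (Primrec.list_length.comp Primrec.fst) (Primrec.list_length.comp Primrec.snd))
    · exact Primrec.cond
        ((Primrec.list_getD false).comp (Primrec.snd.comp Primrec.fst) Primrec.snd)
        (Primrec.option_some.comp
          ((Primrec.list_getD false).comp (Primrec.fst.comp Primrec.fst) Primrec.snd))
        (Primrec.const none)
  refine h1.of_eq fun p => ?_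
  rw [selT_eq_filterMap]
  congr 1
  funext i
  cases h : p.2.getD i false <;> simp [h]

lemma computable_h {g : List Bool → List Bool} (hg : Computable g) :
    Computable (fun w => selT (g w) w) :=
  (primrec_selT.to_comp).comp (hg.pair Computable.id)

lemma tendsto_logb_div_atTop :
    Tendsto (fun n : ℕ => Real.logb 2 ((n : ℝ) + 2) / n) atTop (nhds 0) := by
  have base : Tendsto (fun x : ℝ => Real.log x / x) atTop (nhds 0) :=
    Real.isLittleO_log_id_atTop.tendsto_div_nhds_zero
  have hcomp : Tendsto (fun n : ℕ => ((n : ℝ) + 2)) atTop atTop :=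
    tendsto_atTop_add_const_right _ _ tendsto_natCast_atTop_atTop
  have h1 : Tendsto (fun n : ℕ => Real.log ((n : ℝ) + 2) / ((n : ℝ) + 2)) atTop (nhds 0) :=
    base.comp hcomp
  have h2 : Tendsto (fun n : ℕ => ((n : ℝ) + 2) / n) atTop (nhds 1) := by
    have : Tendsto (fun n : ℕ => 1 + 2 / (n : ℝ)) atTop (nhds (1 + 0)) :=
      tendsto_const_nhds.add (tendsto_const_nhds.div_atTop tendsto_natCast_atTop_atTop)
    rw [add_zero] at this
    refine this.congr' ?_
    filter_upwards [eventually_gt_atTop 0] with n hn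
    have : (n : ℝ) ≠ 0 := Nat.cast_ne_zero.mpr hn.ne'
    field_simp
  have h3 : Tendsto (fun n : ℕ => Real.log ((n : ℝ) + 2) / n) atTop (nhds 0) := by
    have := h1.mul h2
    rw [zero_mul] at this
    refine this.congr' ?_
    filter_upwards [eventually_gt_atTop 0] with n hn
    have h2 : ((n : ℝ) + 2) ≠ 0 := by positivity
    field_simp
  have h4 := h3.mul (tendsto_const_nhds (x := (Real.log 2)⁻¹))
  rw [zero_mul] at h4
  refine h4.congr fun n => ?_
  rw [Real.logb]
  ring

/-- Proposition 2, core of (ii) ⇒ (i): if `z` is computable from `y` and each prefix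
`z_1^{l_n}` is computable from `y_1^n` with `l_n` of linear growth, then the
selected sequence `z/y` has conditional complexity rate strictly below `1`.  The
key property of conditional prefix complexity `CK` — that a part of a string
computable from the condition is for free, up to `O(log)` — is a hypothesis. -/
theorem selected_part_of_computable_has_small_rate
    (CK : List Bool → List Bool → ℕ)
    (hfree : ∀ g : List Bool → List Bool, Computable g → ∃ c : ℕ,
      ∀ w v : List Bool, g w <+: v →
        (CK v w : ℝ) ≤ ((v.length - (g w).length : ℕ) : ℝ)
          + c * Real.logb 2 (v.length + 2) + c)
    (y z : ℕ → Bool) (hzy : ComputableFrom z y)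
    (d : ℝ) (hd : 0 < d)
    (hdens : Tendsto (fun n => ((pref y n).count true : ℝ) / n) atTop (nhds d))
    (l : ℕ → ℕ) (c : ℝ) (hc : 0 < c)
    (hl : Tendsto (fun n => (l n : ℝ) / n) atTop (nhds c))
    (hcomp : ∃ g : List Bool → List Bool, Computable g ∧
      ∀ n, g (pref y n) = pref z (l n)) :
    Filter.limsup
      (fun n => (CK (selT (pref z n) (pref y n)) (pref y n) : ℝ)
        / ((pref y n).count true : ℝ)) atTop < 1 := by
  classical
  obtain ⟨g, hgc, hgl⟩ := hcomp
  set h : List Bool → List Bool := fun w => selT (g w) w with hh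
  have hch : Computable h := computable_h hgc
  obtain ⟨c₀, hc₀⟩ := hfree h hch
  set m : ℕ → ℕ := fun n => min (l n) n with hm
  set cnt : ℕ → ℕ := fun n => (pref y n).count true with hcnt
  set k : ℕ → ℕ := fun n => (pref y (m n)).count true with hk
  set v : ℕ → List Bool := fun n => selT (pref z n) (pref y n) with hv
  have hmn : ∀ n, m n ≤ n := fun n => min_le_right _ _
  have hkey : ∀ n, h (pref y n) = selT (pref z (m n)) (pref y (m n)) := by
    intro n
    simp only [hh, hgl, selT]
    rw [zip_pref z y (l n) n]
  have hpre : ∀ n, h (pref y n) <+: v n := by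
    intro n
    rw [hkey]
    exact selT_mono (pref_prefix z (hmn n)) (pref_prefix y (hmn n))
      (by simp [pref_length])
  have hlenh : ∀ n, (h (pref y n)).length = k n := by
    intro n
    rw [hkey, selT_length_s16 _ _ (by simp [pref_length])]
  have hlenv : ∀ n, (v n).length = cnt n := by
    intro n
    exact selT_length_s16 _ _ (by simp [pref_length])
  have hkcnt : ∀ n, k n ≤ cnt n := by
    intro n
    have := (hpre n).length_le
    rwa [hlenh, hlenv] at this
  have hcntn : ∀ n, cnt n ≤ n := fun n =>
    (List.count_le_length).trans (le_of_eq (pref_length y n))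
  -- l tends to infinity
  have hlinf : Tendsto l atTop atTop := by
    rw [tendsto_atTop]
    intro b
    have h1 : ∀ᶠ n : ℕ in atTop, c / 2 < (l n : ℝ) / n :=
      hl.eventually (eventually_gt_nhds (half_lt_self hc))
    filter_upwards [h1, eventually_ge_atTop (max 1 (Nat.ceil ((2 * (b : ℝ)) / c)))]
      with n hn1 hn2
    have hn1' : 1 ≤ n := le_trans (le_max_left _ _) hn2
    have hnp : (0:ℝ) < n := by exact_mod_cast hn1'
    have h3 : c / 2 * n < l n := (lt_div_iff₀ hnp).mp hn1
    have hceil : ((2 * (b:ℝ)) / c) ≤ n := by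
      refine le_trans (Nat.le_ceil _) ?_
      exact_mod_cast le_trans (le_max_right _ _) hn2
    have h4 : (b:ℝ) ≤ c / 2 * n := by
      calc (b:ℝ) = c / 2 * ((2 * b) / c) := by field_simp
      _ ≤ c / 2 * n := by
          exact mul_le_mul_of_nonneg_left hceil (by positivity)
    exact_mod_cast h4.trans h3.le
  have hminf : Tendsto m atTop atTop := by
    rw [tendsto_atTop]
    intro b
    filter_upwards [hlinf.eventually (eventually_ge_atTop b), eventually_ge_atTop b]
      with n h1 h2
    exact le_min h1 h2
  have hncnt : Tendsto (fun n : ℕ => (n : ℝ) / cnt n) atTop (nhds d⁻¹) := by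
    have := hdens.inv₀ hd.ne'
    refine this.congr fun n => ?_
    rw [inv_div]
  have hcntpos : ∀ᶠ n : ℕ in atTop, 0 < cnt n := by
    have h1 : ∀ᶠ n : ℕ in atTop, d / 2 < (cnt n : ℝ) / n :=
      hdens.eventually (eventually_gt_nhds (half_lt_self hd))
    filter_upwards [h1] with n hn
    by_contra hb
    push_neg at hb
    have hz : cnt n = 0 := Nat.le_zero.mp hb
    rw [hz] at hn
    simp only [Nat.cast_zero, zero_div] at hn
    linarith
  have t1 : Tendsto (fun n : ℕ => (k n : ℝ) / (m n)) atTop (nhds d) := hdens.comp hminf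
  have t2 : Tendsto (fun n : ℕ => ((m n : ℝ)) / n) atTop (nhds (min c 1)) := by
    have base := hl.min (tendsto_const_nhds (x := (1:ℝ)))
    refine base.congr' ?_
    filter_upwards [eventually_gt_atTop 0] with n hn
    have hnp : (0:ℝ) < n := by exact_mod_cast hn
    simp only [hm]
    rw [Nat.cast_min, eq_comm, ← min_div_div_right hnp.le, div_self hnp.ne']
  have t3 : Tendsto (fun n : ℕ => (k n : ℝ) / cnt n) atTop (nhds (min c 1)) := by
    have prod := (t1.mul t2).mul hncnt
    have heq : d * min c 1 * d⁻¹ = min c 1 := by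
      rw [mul_comm d, mul_assoc, mul_inv_cancel₀ hd.ne', mul_one]
    rw [heq] at prod
    refine prod.congr' ?_
    filter_upwards [hcntpos, hminf.eventually (eventually_gt_atTop 0),
      eventually_gt_atTop 0] with n h1 h2 h3
    have hmp : ((m n : ℕ) : ℝ) ≠ 0 := by exact_mod_cast h2.ne'
    have hnp : ((n : ℕ) : ℝ) ≠ 0 := by exact_mod_cast h3.ne'
    have hcp : ((cnt n : ℕ) : ℝ) ≠ 0 := by exact_mod_cast h1.ne'
    field_simp
    try ring
  have t4 : Tendsto (fun n : ℕ => ((c₀:ℝ) * Real.logb 2 ((n:ℝ)+2) + c₀) / cnt n)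
      atTop (nhds 0) := by
    have ha : Tendsto (fun n : ℕ => ((c₀:ℝ) * Real.logb 2 ((n:ℝ)+2) + c₀) / n)
        atTop (nhds 0) := by
      have h1 := tendsto_logb_div_atTop.const_mul (c₀:ℝ)
      have h2 : Tendsto (fun n : ℕ => (c₀:ℝ) / n) atTop (nhds 0) :=
        tendsto_const_nhds.div_atTop tendsto_natCast_atTop_atTop
      have h3 := h1.add h2
      rw [mul_zero, add_zero] at h3
      refine h3.congr fun n => ?_
      ring
    have prod := ha.mul hncnt
    rw [zero_mul] at prod
    refine prod.congr' ?_
    filter_upwards [eventually_gt_atTop 0] with n hn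
    have hnp : ((n : ℕ) : ℝ) ≠ 0 := by exact_mod_cast hn.ne'
    by_cases hcz : ((cnt n : ℕ) : ℝ) = 0
    · simp [hcz]
    · field_simp
      try ring
  set A : ℕ → ℝ := fun n =>
    1 - (k n : ℝ) / cnt n + ((c₀:ℝ) * Real.logb 2 ((n:ℝ)+2) + c₀) / cnt n with hA
  have hAlim : Tendsto A atTop (nhds (1 - min c 1)) := by
    have h1 := (tendsto_const_nhds (x := (1:ℝ)) (f := atTop)).sub t3
    have h2 := h1.add t4
    rw [add_zero] at h2
    exact h2
  have hfA : ∀ᶠ n : ℕ in atTop,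
      (CK (v n) (pref y n) : ℝ) / cnt n ≤ A n := by
    filter_upwards [hcntpos] with n hn
    have hnn : (0:ℝ) < (cnt n : ℝ) := by exact_mod_cast hn
    have hb := hc₀ (pref y n) (v n) (hpre n)
    rw [hlenv, hlenh] at hb
    have hlog : Real.logb 2 ((cnt n : ℝ) + 2) ≤ Real.logb 2 ((n:ℝ)+2) := by
      apply Real.logb_le_logb_of_le (by norm_num) (by positivity)
      have := hcntn n
      have : (cnt n : ℝ) ≤ n := by exact_mod_cast this
      linarith
    have hsub : ((cnt n - k n : ℕ) : ℝ) = (cnt n : ℝ) - k n :=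
      by rw [Nat.cast_sub (hkcnt n)]
    have hb2 : (CK (v n) (pref y n) : ℝ) ≤
        ((cnt n : ℝ) - k n) + ((c₀:ℝ) * Real.logb 2 ((n:ℝ)+2) + c₀) := by
      rw [hsub] at hb
      have hmul := mul_le_mul_of_nonneg_left hlog (by positivity : (0:ℝ) ≤ (c₀:ℝ))
      linarith
    have hAeq : A n = ((cnt n : ℝ) - k n + ((c₀:ℝ) * Real.logb 2 ((n:ℝ)+2) + c₀)) / cnt n := by
      simp only [hA]
      field_simp
      try ring
    rw [hAeq]
    gcongr
  have hcob : IsCoboundedUnder (· ≤ ·) atTop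
      (fun n : ℕ => (CK (v n) (pref y n) : ℝ) / cnt n) :=
    isCoboundedUnder_le_of_eventually_le atTop (x := 0)
      (Eventually.of_forall fun n => by positivity)
  have hbdd : IsBoundedUnder (· ≤ ·) atTop A := hAlim.isBoundedUnder_le
  have h1 : limsup (fun n : ℕ => (CK (v n) (pref y n) : ℝ) / cnt n) atTop
      ≤ limsup A atTop := limsup_le_limsup hfA hcob hbdd
  rw [hAlim.limsup_eq] at h1
  have hmin : 0 < min c 1 := lt_min hc one_pos
  calc limsup (fun n : ℕ => (CK (v n) (pref y n) : ℝ) / cnt n) atTop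
      ≤ 1 - min c 1 := h1
  _ < 1 := by linarith
end
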